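/- Let H be a Hopf algebra over a field k with antipode S. Define [a,b,c] := a·S(b)·c for a,b,c ∈ H. Then the underlying coalgebra of H together with this ternary operation is a Hopf heap; explicitly: ε(aS(b)c) = ε(a)ε(b)ε(c); Δ(aS(b)c) = a₁S(b₂)c₁ ⊗ a₂S(b₁)c₂ (Sweedler notation); (aS(b)c)S(d)h = aS(b)(cS(d)h); and c₁S(c₂)a = ε(c)a = aS(c₁)c₂ for all a,b,c,d,h ∈ H. -/
import Mathlib


open TensorProduct

noncomputable section

variable (k : Type*) [Field k]

section Shuffles

variable (A B P Q R S : Type*)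
  [AddCommGroup A] [Module k A] [AddCommGroup B] [Module k B]
  [AddCommGroup P] [Module k P] [AddCommGroup Q] [Module k Q]
  [AddCommGroup R] [Module k R] [AddCommGroup S] [Module k S]

/-- `(a ⊗ b) ⊗ ((p ⊗ q) ⊗ (r ⊗ s)) ↦ (a ⊗ (q ⊗ r)) ⊗ (b ⊗ (p ⊗ s))`, the shuffle appearing in
the compatibility of a Hopf-heap bracket with comultiplication:
`Δ([a,b,c]) = [a₁,b₂,c₁] ⊗ [a₂,b₁,c₂]`. -/
def sweedlerShuffle :
    ((A ⊗[k] B) ⊗[k] ((P ⊗[k] Q) ⊗[k] (R ⊗[k] S))) →ₗ[k]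
      ((A ⊗[k] (Q ⊗[k] R)) ⊗[k] (B ⊗[k] (P ⊗[k] S))) :=
  (tensorTensorTensorComm k A B (Q ⊗[k] R) (P ⊗[k] S)).toLinearMap ∘ₗ
    (TensorProduct.map LinearMap.id
      ((tensorTensorTensorComm k Q P R S).toLinearMap ∘ₗ
        TensorProduct.map (TensorProduct.comm k P Q).toLinearMap LinearMap.id))

/-- `u₁ ⊗ (u₂ ⊗ (u₃ ⊗ u₄)) ↦ (u₁ ⊗ (u₄ ⊗ u₂)) ⊗ u₃`, the shuffle appearing in the
Rota–Baxter identity. -/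
def rbShuffle :
    (A ⊗[k] (P ⊗[k] (Q ⊗[k] R))) →ₗ[k] ((A ⊗[k] (R ⊗[k] P)) ⊗[k] Q) :=
  (TensorProduct.assoc k A (R ⊗[k] P) Q).symm.toLinearMap ∘ₗ
    TensorProduct.map LinearMap.id
      ((TensorProduct.comm k Q (R ⊗[k] P)).toLinearMap ∘ₗ
        (TensorProduct.assoc k Q R P).toLinearMap ∘ₗ
        (TensorProduct.comm k P (Q ⊗[k] R)).toLinearMap)

end Shuffles

section Mul

variable {C : Type*} [AddCommGroup C] [Module k C]

/-- Right multiplication `a ↦ μ (a ⊗ b)` by a fixed element, for a bilinear product `μ`. -/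
def rmulBy (μ : (C ⊗[k] C) →ₗ[k] C) (b : C) : C →ₗ[k] C :=
  μ ∘ₗ ((TensorProduct.mk k C C).flip b)

end Mul

section Heap

variable {C : Type*} [AddCommGroup C] [Module k C] [Coalgebra k C]

/-- Iterated comultiplication `a ↦ a₁ ⊗ (a₂ ⊗ a₃)`. -/
def comul2 : C →ₗ[k] (C ⊗[k] (C ⊗[k] C)) :=
  (TensorProduct.map LinearMap.id Coalgebra.comul) ∘ₗ Coalgebra.comul

/-- Iterated comultiplication `a ↦ a₁ ⊗ (a₂ ⊗ (a₃ ⊗ a₄))`. -/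
def comul3 : C →ₗ[k] (C ⊗[k] (C ⊗[k] (C ⊗[k] C))) :=
  (TensorProduct.map LinearMap.id (comul2 k)) ∘ₗ Coalgebra.comul

/-- The pointwise ternary bracket `[a,b,c]` of a Hopf heap with structure map `χ`. -/
def br (χ : (C ⊗[k] (C ⊗[k] C)) →ₗ[k] C) (a b c : C) : C := χ (a ⊗ₜ[k] (b ⊗ₜ[k] c))

/-- `x` is a group-like element of the coalgebra `C`. -/
def IsGrouplike (x : C) : Prop :=
  Coalgebra.comul (R := k) x = x ⊗ₜ[k] x ∧ Coalgebra.counit (R := k) x = 1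

/-- `(C, Δ, ε, χ)` is a Hopf heap: `χ` is a coalgebra map `C ⊗ C^cop ⊗ C → C`
(counit and comultiplication conditions, the latter in the Sweedler form
`Δ([a,b,c]) = [a₁,b₂,c₁] ⊗ [a₂,b₁,c₂]`), the bracket is associative
(`[[a,b,c],d,h] = [a,b,[c,d,h]]`), and `[c₁,c₂,a] = ε(c)a = [a,c₁,c₂]`. -/
structure IsHopfHeap (χ : (C ⊗[k] (C ⊗[k] C)) →ₗ[k] C) : Prop where
  counit_br : ∀ a b c : C,
    Coalgebra.counit (R := k) (br k χ a b c) =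
      Coalgebra.counit (R := k) a * Coalgebra.counit (R := k) b * Coalgebra.counit (R := k) c
  comul_br : ∀ a b c : C,
    Coalgebra.comul (R := k) (br k χ a b c) =
      TensorProduct.map χ χ (sweedlerShuffle k C C C C C C
        ((Coalgebra.comul (R := k) a) ⊗ₜ[k]
          ((Coalgebra.comul (R := k) b) ⊗ₜ[k] (Coalgebra.comul (R := k) c))))
  assoc_br : ∀ a b c d h : C,
    br k χ (br k χ a b c) d h = br k χ a b (br k χ c d h)
  left_cancel : ∀ c a : C,
    χ ((TensorProduct.assoc k C C C) ((Coalgebra.comul (R := k) c) ⊗ₜ[k] a)) =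
      Coalgebra.counit (R := k) c • a
  right_cancel : ∀ c a : C,
    χ (a ⊗ₜ[k] (Coalgebra.comul (R := k) c)) = Coalgebra.counit (R := k) c • a

/-- `B` is a Rota–Baxter operator on the Hopf heap `(C, Δ, χ)`:
`B [a,b,c] = [B a, B b, B c]` and
`B(a₁) ⊗ B(a₂) = [B(a)₁, B(B(a)₄), B(B(a)₂)] ⊗ B(a)₃`. -/
structure IsRBOp (χ : (C ⊗[k] (C ⊗[k] C)) →ₗ[k] C) (B : C →ₗ[k] C) : Prop where
  map_br : ∀ a b c : C, B (br k χ a b c) = br k χ (B a) (B b) (B c)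
  rb : ∀ a : C,
    TensorProduct.map B B (Coalgebra.comul (R := k) a) =
      TensorProduct.map (χ ∘ₗ TensorProduct.map LinearMap.id (TensorProduct.map B B))
        LinearMap.id (rbShuffle k C C C C (comul3 k (B a)))

/-- The multiplication `a ·ₓ b = [a, x, b]` of the Hopf algebra `H_x(C)`, as a linear map. -/
def heapMul (χ : (C ⊗[k] (C ⊗[k] C)) →ₗ[k] C) (x : C) : (C ⊗[k] C) →ₗ[k] C :=
  χ ∘ₗ TensorProduct.map LinearMap.id (TensorProduct.mk k C C x)

/-- The antipode `S_x(a) = [x, a, x]` of the Hopf algebra `H_x(C)`, as a linear map. -/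
def heapAntipode (χ : (C ⊗[k] (C ⊗[k] C)) →ₗ[k] C) (x : C) : C →ₗ[k] C :=
  χ ∘ₗ (TensorProduct.mk k C (C ⊗[k] C) x) ∘ₗ ((TensorProduct.mk k C C).flip x)

end Heap

section HeapHom

variable {C D : Type*} [AddCommGroup C] [Module k C] [Coalgebra k C]
  [AddCommGroup D] [Module k D] [Coalgebra k D]

/-- `f` is a homomorphism of Hopf heaps: a coalgebra map preserving the bracket. -/
def IsHeapHom (χC : (C ⊗[k] (C ⊗[k] C)) →ₗ[k] C) (χD : (D ⊗[k] (D ⊗[k] D)) →ₗ[k] D)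
    (f : C →ₗ[k] D) : Prop :=
  (∀ a : C, Coalgebra.comul (R := k) (f a) = TensorProduct.map f f (Coalgebra.comul (R := k) a)) ∧
  (∀ a : C, Coalgebra.counit (R := k) (f a) = Coalgebra.counit (R := k) a) ∧
  (∀ a b c : C, f (br k χC a b c) = br k χD (f a) (f b) (f c))

end HeapHom

section HopfAlg

variable (H : Type*) [Ring H] [HopfAlgebra k H]

/-- The Hopf-heap structure map `a ⊗ b ⊗ c ↦ a · S(b) · c` of a Hopf algebra. -/
def hopfHeapChi : (H ⊗[k] (H ⊗[k] H)) →ₗ[k] H :=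
  (LinearMap.mul' k H) ∘ₗ TensorProduct.map LinearMap.id
    ((LinearMap.mul' k H) ∘ₗ TensorProduct.map (HopfAlgebra.antipode (R := k)) LinearMap.id)

/-- The triple multiplication `a ⊗ (b ⊗ c) ↦ a·(b·c)`. -/
def mulTriple : (H ⊗[k] (H ⊗[k] H)) →ₗ[k] H :=
  (LinearMap.mul' k H) ∘ₗ TensorProduct.map LinearMap.id (LinearMap.mul' k H)

end HopfAlg

end
open TensorProduct LinearMap Coalgebra HopfAlgebra

noncomputable section HHAux

variable {k : Type*} [Field k] {H : Type*} [Ring H] [HopfAlgebra k H]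
variable {A : Type*} [Semiring A] [Algebra k A]

/-- Convolution product on `Hom(H, A)`. -/
def hhConv (f g : H →ₗ[k] A) : H →ₗ[k] A :=
  LinearMap.mul' k A ∘ₗ TensorProduct.map f g ∘ₗ Coalgebra.comul

/-- Convolution unit. -/
def hhOne : H →ₗ[k] A := Algebra.linearMap k A ∘ₗ Coalgebra.counit

lemma hhConv_one_right (f : H →ₗ[k] A) : hhConv f hhOne = f := by
  have h1 : TensorProduct.map f (hhOne (k := k) (H := H) (A := A)) =
      TensorProduct.map f (Algebra.linearMap k A) ∘ₗ Coalgebra.counit.lTensor H := by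
    ext x y; simp [hhOne]
  rw [hhConv, h1]
  simp only [LinearMap.comp_assoc]
  rw [Coalgebra.lTensor_counit_comp_comul]
  ext a; simp

lemma hhConv_one_left (f : H →ₗ[k] A) : hhConv hhOne f = f := by
  have h1 : TensorProduct.map (hhOne (k := k) (H := H) (A := A)) f =
      TensorProduct.map (Algebra.linearMap k A) f ∘ₗ Coalgebra.counit.rTensor H := by
    ext x y; simp [hhOne]
  rw [hhConv, h1]
  simp only [LinearMap.comp_assoc]
  rw [Coalgebra.rTensor_counit_comp_comul]
  ext a; simp [Algebra.smul_def]

lemma hhConv_assoc (f g h : H →ₗ[k] A) :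
    hhConv (hhConv f g) h = hhConv f (hhConv g h) := by
  have e1 : TensorProduct.map (hhConv f g) h =
      TensorProduct.map (LinearMap.mul' k A ∘ₗ TensorProduct.map f g) h ∘ₗ
        Coalgebra.comul.rTensor H := by
    ext x y; simp [hhConv]
  have e2 : TensorProduct.map f (hhConv g h) =
      TensorProduct.map f (LinearMap.mul' k A ∘ₗ TensorProduct.map g h) ∘ₗ
        Coalgebra.comul.lTensor H := by
    ext x y; simp [hhConv]
  have core : (LinearMap.mul' k A ∘ₗ
        TensorProduct.map (LinearMap.mul' k A ∘ₗ TensorProduct.map f g) h) ∘ₗ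
        (TensorProduct.assoc k H H H).symm.toLinearMap =
      LinearMap.mul' k A ∘ₗ TensorProduct.map f (LinearMap.mul' k A ∘ₗ TensorProduct.map g h) := by
    ext x y z; simp [mul_assoc]
  calc hhConv (hhConv f g) h
      = LinearMap.mul' k A ∘ₗ
          TensorProduct.map (LinearMap.mul' k A ∘ₗ TensorProduct.map f g) h ∘ₗ
          Coalgebra.comul.rTensor H ∘ₗ Coalgebra.comul := by
        rw [hhConv, e1]; simp only [LinearMap.comp_assoc]
    _ = LinearMap.mul' k A ∘ₗ
          TensorProduct.map (LinearMap.mul' k A ∘ₗ TensorProduct.map f g) h ∘ₗ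
          (TensorProduct.assoc k H H H).symm.toLinearMap ∘ₗ
          Coalgebra.comul.lTensor H ∘ₗ Coalgebra.comul := by
        rw [← Coalgebra.coassoc_symm]
    _ = ((LinearMap.mul' k A ∘ₗ
          TensorProduct.map (LinearMap.mul' k A ∘ₗ TensorProduct.map f g) h) ∘ₗ
          (TensorProduct.assoc k H H H).symm.toLinearMap) ∘ₗ
          Coalgebra.comul.lTensor H ∘ₗ Coalgebra.comul := by
        simp only [LinearMap.comp_assoc]
    _ = (LinearMap.mul' k A ∘ₗ
          TensorProduct.map f (LinearMap.mul' k A ∘ₗ TensorProduct.map g h)) ∘ₗ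
          Coalgebra.comul.lTensor H ∘ₗ Coalgebra.comul := by rw [core]
    _ = hhConv f (hhConv g h) := by
        rw [hhConv, e2]; simp only [LinearMap.comp_assoc]


section Antipode

/-- `ε ∘ S = ε`. -/
lemma hh_counit_antipode (b : H) :
    Coalgebra.counit (R := k) (HopfAlgebra.antipode (R := k) b) = Coalgebra.counit (R := k) b := by
  have hcu : (hhOne : H →ₗ[k] k) = Coalgebra.counit := by ext a; simp [hhOne]
  have e : LinearMap.mul' k k ∘ₗ
        TensorProduct.map (Coalgebra.counit ∘ₗ HopfAlgebra.antipode (R := k)) Coalgebra.counit =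
      Coalgebra.counit ∘ₗ
        (LinearMap.mul' k H ∘ₗ (HopfAlgebra.antipode (R := k)).rTensor H) := by
    ext x y; simp
  have key : hhConv (Coalgebra.counit ∘ₗ HopfAlgebra.antipode (R := k))
      (Coalgebra.counit (R := k) (A := H)) = Coalgebra.counit (R := k) (A := H) := by
    rw [hhConv, ← LinearMap.comp_assoc, e]
    simp only [LinearMap.comp_assoc]
    rw [HopfAlgebra.mul_antipode_rTensor_comul]
    ext a; simp
  have := hhConv_one_right (Coalgebra.counit ∘ₗ HopfAlgebra.antipode (R := k) (A := H))
  rw [hcu, key] at this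
  exact (LinearMap.congr_fun this b).symm

/-- `Δ ∘ S = τ ∘ (S ⊗ S) ∘ Δ` as linear maps. -/
lemma hh_comul_antipode_map :
    Coalgebra.comul ∘ₗ HopfAlgebra.antipode (R := k) (A := H) =
      (TensorProduct.comm k H H).toLinearMap ∘ₗ
        TensorProduct.map (HopfAlgebra.antipode (R := k)) (HopfAlgebra.antipode (R := k)) ∘ₗ
        Coalgebra.comul := by
  set S : H →ₗ[k] H := HopfAlgebra.antipode (R := k)
  set f₁ : H →ₗ[k] H ⊗[k] H := Coalgebra.comul ∘ₗ S with hf₁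
  set f₂ : H →ₗ[k] H ⊗[k] H :=
    (TensorProduct.comm k H H).toLinearMap ∘ₗ TensorProduct.map S S ∘ₗ Coalgebra.comul with hf₂
  set d₁ : H →ₗ[k] H ⊗[k] H := (TensorProduct.mk k H H).flip 1 with hd₁
  set d₂ : H →ₗ[k] H ⊗[k] H := TensorProduct.mk k H H 1 with hd₂
  -- claim 1 : f₁ ⋆ Δ = 1
  have claim1 : hhConv f₁ Coalgebra.comul = hhOne := by
    have e : LinearMap.mul' k (H ⊗[k] H) ∘ₗ TensorProduct.map f₁ Coalgebra.comul =
        Coalgebra.comul ∘ₗ (LinearMap.mul' k H ∘ₗ S.rTensor H) := by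
      ext x y; simp [hf₁]
    rw [hhConv, ← LinearMap.comp_assoc, e]
    simp only [LinearMap.comp_assoc]
    rw [HopfAlgebra.mul_antipode_rTensor_comul]
    ext a
    simp [hhOne, Algebra.algebraMap_eq_smul_one, Algebra.TensorProduct.one_def]
  -- Δ = d₁ ⋆ d₂
  have hd : hhConv d₁ d₂ = Coalgebra.comul := by
    have e : LinearMap.mul' k (H ⊗[k] H) ∘ₗ TensorProduct.map d₁ d₂ = LinearMap.id := by
      ext x y; simp [hd₁, hd₂, Algebra.TensorProduct.tmul_mul_tmul]
    rw [hhConv, ← LinearMap.comp_assoc, e, LinearMap.id_comp]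
  -- d₁ ⋆ (d₁ ∘ S) = 1
  have h11 : hhConv d₁ (d₁ ∘ₗ S) = hhOne := by
    have e : LinearMap.mul' k (H ⊗[k] H) ∘ₗ TensorProduct.map d₁ (d₁ ∘ₗ S) =
        d₁ ∘ₗ (LinearMap.mul' k H ∘ₗ S.lTensor H) := by
      ext x y; simp [hd₁, Algebra.TensorProduct.tmul_mul_tmul]
    rw [hhConv, ← LinearMap.comp_assoc, e]
    simp only [LinearMap.comp_assoc]
    rw [HopfAlgebra.mul_antipode_lTensor_comul]
    ext a
    simp [hhOne, hd₁, Algebra.algebraMap_eq_smul_one, Algebra.TensorProduct.one_def,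
      TensorProduct.smul_tmul']
  -- d₂ ⋆ (d₂ ∘ S) = 1
  have h22 : hhConv d₂ (d₂ ∘ₗ S) = hhOne := by
    have e : LinearMap.mul' k (H ⊗[k] H) ∘ₗ TensorProduct.map d₂ (d₂ ∘ₗ S) =
        d₂ ∘ₗ (LinearMap.mul' k H ∘ₗ S.lTensor H) := by
      ext x y; simp [hd₂, Algebra.TensorProduct.tmul_mul_tmul]
    rw [hhConv, ← LinearMap.comp_assoc, e]
    simp only [LinearMap.comp_assoc]
    rw [HopfAlgebra.mul_antipode_lTensor_comul]
    ext a
    simp [hhOne, hd₂, Algebra.algebraMap_eq_smul_one, Algebra.TensorProduct.one_def,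
      TensorProduct.tmul_smul]
  -- f₂ = (d₂ ∘ S) ⋆ (d₁ ∘ S)
  have hi : hhConv (d₂ ∘ₗ S) (d₁ ∘ₗ S) = f₂ := by
    have e : LinearMap.mul' k (H ⊗[k] H) ∘ₗ TensorProduct.map (d₂ ∘ₗ S) (d₁ ∘ₗ S) =
        (TensorProduct.comm k H H).toLinearMap ∘ₗ TensorProduct.map S S := by
      ext x y; simp [hd₁, hd₂, Algebra.TensorProduct.tmul_mul_tmul]
    rw [hhConv, ← LinearMap.comp_assoc, e, hf₂, LinearMap.comp_assoc]
  -- claim 2 : Δ ⋆ f₂ = 1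
  have claim2 : hhConv Coalgebra.comul f₂ = hhOne := by
    calc hhConv Coalgebra.comul f₂
        = hhConv (hhConv d₁ d₂) (hhConv (d₂ ∘ₗ S) (d₁ ∘ₗ S)) := by rw [hd, hi]
      _ = hhConv d₁ (hhConv d₂ (hhConv (d₂ ∘ₗ S) (d₁ ∘ₗ S))) := hhConv_assoc _ _ _
      _ = hhConv d₁ (hhConv (hhConv d₂ (d₂ ∘ₗ S)) (d₁ ∘ₗ S)) := by rw [hhConv_assoc]
      _ = hhConv d₁ (hhConv hhOne (d₁ ∘ₗ S)) := by rw [h22]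
      _ = hhConv d₁ (d₁ ∘ₗ S) := by rw [hhConv_one_left]
      _ = hhOne := h11
  calc f₁ = hhConv f₁ hhOne := (hhConv_one_right f₁).symm
    _ = hhConv f₁ (hhConv Coalgebra.comul f₂) := by rw [claim2]
    _ = hhConv (hhConv f₁ Coalgebra.comul) f₂ := (hhConv_assoc _ _ _).symm
    _ = hhConv hhOne f₂ := by rw [claim1]
    _ = f₂ := hhConv_one_left f₂

lemma hh_comul_antipode (b : H) :
    Coalgebra.comul (R := k) (HopfAlgebra.antipode (R := k) b) =
      (TensorProduct.comm k H H)
        (TensorProduct.map (HopfAlgebra.antipode (R := k)) (HopfAlgebra.antipode (R := k))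
          (Coalgebra.comul (R := k) b)) :=
  LinearMap.congr_fun hh_comul_antipode_map b

end Antipode
end HHAux

set_option synthInstance.maxHeartbeats 1000000 in
/-- a Hopf algebra `H` with `[a,b,c] := a·S(b)·c` is a Hopf heap; explicitly,
the counit, comultiplication, associativity and cancellation conditions of a Hopf heap hold. -/
theorem hopfAlgebra_gives_hopfHeap (k : Type*) [Field k] (H : Type*) [Ring H]
    [HopfAlgebra k H] :
    (∀ a b c : H, br k (hopfHeapChi k H) a b c = a * (HopfAlgebra.antipode (R := k) b) * c) ∧
    IsHopfHeap k (hopfHeapChi k H)     := by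
  classical
  have hbr : ∀ a b c : H, br k (hopfHeapChi k H) a b c =
      a * (HopfAlgebra.antipode (R := k) b) * c := by
    intro a b c
    simp [br, hopfHeapChi, mul_assoc]
  refine ⟨hbr, ?_, ?_, ?_, ?_, ?_⟩
  · intro a b c
    rw [hbr]
    simp [hh_counit_antipode]
  · intro a b c
    rw [hbr]
    have key : ∀ x y z : H ⊗[k] H,
        x * (TensorProduct.comm k H H)
          (TensorProduct.map (HopfAlgebra.antipode (R := k))
            (HopfAlgebra.antipode (R := k)) y) * z =
        TensorProduct.map (hopfHeapChi k H) (hopfHeapChi k H)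
          (sweedlerShuffle k H H H H H H (x ⊗ₜ[k] (y ⊗ₜ[k] z))) := by
      intro x y z
      induction x using TensorProduct.induction_on with
      | zero => simp only [zero_tmul, LinearMap.map_zero, zero_mul]
      | add x₁ x₂ ih₁ ih₂ => simp only [add_tmul, map_add, add_mul, ih₁, ih₂]
      | tmul a₁ a₂ =>
        induction y using TensorProduct.induction_on with
        | zero => simp only [zero_tmul, tmul_zero, map_zero, LinearMap.map_zero, mul_zero, zero_mul]
        | add y₁ y₂ ih₁ ih₂ =>
            simp only [add_tmul, tmul_add, map_add, mul_add, add_mul, ih₁, ih₂]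
        | tmul b₁ b₂ =>
          induction z using TensorProduct.induction_on with
          | zero => simp only [tmul_zero, LinearMap.map_zero, mul_zero]
          | add z₁ z₂ ih₁ ih₂ =>
              simp only [add_tmul, tmul_add, map_add, mul_add, add_mul, ih₁, ih₂]
          | tmul c₁ c₂ =>
              simp [sweedlerShuffle, hopfHeapChi, Algebra.TensorProduct.tmul_mul_tmul,
                mul_assoc]
    rw [Bialgebra.comul_mul, Bialgebra.comul_mul, hh_comul_antipode, key]
  · intro a b c d h
    simp only [hbr]
    simp [mul_assoc]
  · intro c a
    have repr := Coalgebra.Repr.arbitrary k c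
    rw [← repr.eq]
    calc hopfHeapChi k H ((TensorProduct.assoc k H H H)
          ((∑ i ∈ repr.index, repr.left i ⊗ₜ[k] repr.right i) ⊗ₜ[k] a))
        = ∑ i ∈ repr.index,
            repr.left i * (HopfAlgebra.antipode (R := k) (repr.right i) * a) := by
          simp [TensorProduct.sum_tmul, hopfHeapChi]
      _ = (∑ i ∈ repr.index,
            repr.left i * HopfAlgebra.antipode (R := k) (repr.right i)) * a := by
          rw [Finset.sum_mul]; simp [mul_assoc]
      _ = Coalgebra.counit (R := k) c • a := by
          rw [HopfAlgebra.sum_mul_antipode_eq_smul repr, smul_mul_assoc, one_mul]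
  · intro c a
    have repr := Coalgebra.Repr.arbitrary k c
    rw [← repr.eq]
    calc hopfHeapChi k H (a ⊗ₜ[k] (∑ i ∈ repr.index, repr.left i ⊗ₜ[k] repr.right i))
        = ∑ i ∈ repr.index,
            a * (HopfAlgebra.antipode (R := k) (repr.left i) * repr.right i) := by
          simp [TensorProduct.tmul_sum, hopfHeapChi]
      _ = a * (∑ i ∈ repr.index,
            HopfAlgebra.antipode (R := k) (repr.left i) * repr.right i) := by
          rw [Finset.mul_sum]
      _ = Coalgebra.counit (R := k) c • a := by
          rw [HopfAlgebra.sum_antipode_mul_eq_smul repr, mul_smul_comm, mul_one]
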